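/- arXiv:2507.20653 — 4 statements merged into one kernel-verified Lean document; each statement's English description precedes it below -/
import Mathlib

section
/- Let (a(k))_{k≥1}, (λ(k))_{k≥0}, (μ(k))_{k≥0}, (a'(k))_{k≥1}, (λ'(k))_{k≥0} be sequences of complex numbers with λ(0) = λ'(0) = μ(0) = 1, satisfying the recursions ν·μ(ν) = −∑_{l=1}^{ν} a(l) μ(ν−l), ν·λ(ν) = ∑_{l=1}^{ν} A(l) λ(ν−l), and ν·λ'(ν) = ∑_{l=1}^{ν} A'(l) λ'(ν−l) for all ν ≥ 1, where A(k), A'(k) are non-negative reals and |a(k)|² ≤ A(k)·A'(k) for all k ≥ 1, and λ(k), λ'(k) ≥ 0 for all k. Then |μ(ν)|² ≤ λ(ν)·λ'(ν) for all ν ≥ 0. -/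
theorem stmt_2 (a μ : ℕ → ℂ) (lam lam' A A' : ℕ → ℝ)
    (hlam0 : lam 0 = 1) (hlam'0 : lam' 0 = 1) (hμ0 : μ 0 = 1)
    (hA : ∀ k, 1 ≤ k → 0 ≤ A k) (hA' : ∀ k, 1 ≤ k → 0 ≤ A' k)
    (ha : ∀ k, 1 ≤ k → ‖a k‖ ^ 2 ≤ A k * A' k)
    (hlam : ∀ k, 0 ≤ lam k) (hlam' : ∀ k, 0 ≤ lam' k)
    (hrecμ : ∀ ν : ℕ, 1 ≤ ν → (ν : ℂ) * μ ν = -∑ l ∈ Finset.Icc 1 ν, a l * μ (ν - l))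
    (hrecl : ∀ ν : ℕ, 1 ≤ ν → (ν : ℝ) * lam ν = ∑ l ∈ Finset.Icc 1 ν, A l * lam (ν - l))
    (hrecl' : ∀ ν : ℕ, 1 ≤ ν → (ν : ℝ) * lam' ν = ∑ l ∈ Finset.Icc 1 ν, A' l * lam' (ν - l)) :
    ∀ ν, ‖μ ν‖ ^ 2 ≤ lam ν * lam' ν := by
  intro ν
  induction ν using Nat.strong_induction_on with
  | _ ν ih =>
    match ν with
    | 0 => simp [hμ0, hlam0, hlam'0]
    | (n+1) =>
      set ν := n + 1 with hνdef
      have hν : 1 ≤ ν := Nat.succ_le_succ (Nat.zero_le n)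
      have hνR : (0:ℝ) < (ν:ℝ) := by exact_mod_cast Nat.succ_pos n
      have h1 : (ν:ℝ) * ‖μ ν‖ ≤ ∑ l ∈ Finset.Icc 1 ν, ‖a l‖ * ‖μ (ν - l)‖ := by
        calc (ν:ℝ) * ‖μ ν‖ = ‖(ν:ℂ) * μ ν‖ := by
              rw [norm_mul, Complex.norm_natCast]
          _ = ‖∑ l ∈ Finset.Icc 1 ν, a l * μ (ν - l)‖ := by rw [hrecμ ν hν, norm_neg]
          _ ≤ ∑ l ∈ Finset.Icc 1 ν, ‖a l * μ (ν - l)‖ := norm_sum_le _ _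
          _ = ∑ l ∈ Finset.Icc 1 ν, ‖a l‖ * ‖μ (ν - l)‖ := by simp [norm_mul]
      have h2 : ∑ l ∈ Finset.Icc 1 ν, ‖a l‖ * ‖μ (ν - l)‖ ≤
          ∑ l ∈ Finset.Icc 1 ν,
            Real.sqrt (A l * lam (ν - l)) * Real.sqrt (A' l * lam' (ν - l)) := by
        refine Finset.sum_le_sum fun l hl => ?_
        simp only [Finset.mem_Icc] at hl
        have hAl := hA l hl.1
        have hA'l := hA' l hl.1
        have hal : ‖a l‖ ≤ Real.sqrt (A l * A' l) := by
          rw [← Real.sqrt_sq (norm_nonneg (a l))]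
          exact Real.sqrt_le_sqrt (ha l hl.1)
        have hμl : ‖μ (ν - l)‖ ≤ Real.sqrt (lam (ν - l) * lam' (ν - l)) := by
          rw [← Real.sqrt_sq (norm_nonneg _)]
          exact Real.sqrt_le_sqrt (ih (ν - l) (by omega))
        calc ‖a l‖ * ‖μ (ν - l)‖
            ≤ Real.sqrt (A l * A' l) * Real.sqrt (lam (ν - l) * lam' (ν - l)) :=
              mul_le_mul hal hμl (norm_nonneg _) (Real.sqrt_nonneg _)
          _ = Real.sqrt (A l * lam (ν - l)) * Real.sqrt (A' l * lam' (ν - l)) := by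
              rw [← Real.sqrt_mul (mul_nonneg hAl hA'l), ← Real.sqrt_mul (mul_nonneg hAl (hlam _))]
              ring_nf
      have h3 : (∑ l ∈ Finset.Icc 1 ν,
            Real.sqrt (A l * lam (ν - l)) * Real.sqrt (A' l * lam' (ν - l))) ^ 2 ≤
          ((ν:ℝ) * lam ν) * ((ν:ℝ) * lam' ν) := by
        calc (∑ l ∈ Finset.Icc 1 ν,
              Real.sqrt (A l * lam (ν - l)) * Real.sqrt (A' l * lam' (ν - l))) ^ 2
            ≤ (∑ l ∈ Finset.Icc 1 ν, Real.sqrt (A l * lam (ν - l)) ^ 2) *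
              ∑ l ∈ Finset.Icc 1 ν, Real.sqrt (A' l * lam' (ν - l)) ^ 2 :=
              Finset.sum_mul_sq_le_sq_mul_sq _ _ _
          _ = ((ν:ℝ) * lam ν) * ((ν:ℝ) * lam' ν) := by
              rw [hrecl ν hν, hrecl' ν hν]
              congr 1
              · refine Finset.sum_congr rfl fun l hl => ?_
                simp only [Finset.mem_Icc] at hl
                exact Real.sq_sqrt (by have := hA l hl.1; have := hlam (ν - l); positivity)
              · refine Finset.sum_congr rfl fun l hl => ?_
                simp only [Finset.mem_Icc] at hl
                exact Real.sq_sqrt (by have := hA' l hl.1; have := hlam' (ν - l); positivity)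
      have h4 : ((ν:ℝ) * ‖μ ν‖) ^ 2 ≤ ((ν:ℝ) * lam ν) * ((ν:ℝ) * lam' ν) := by
        refine le_trans (pow_le_pow_left₀ (by positivity) (h1.trans h2) 2) h3
      have h5 : (ν:ℝ)^2 * ‖μ ν‖^2 ≤ (ν:ℝ)^2 * (lam ν * lam' ν) := by nlinarith [h4]
      exact le_of_mul_le_mul_left (by linarith) (by positivity : (0:ℝ) < (ν:ℝ)^2)
end

section
/- Suppose D : [σ₀, ∞) → ℝ_{≥0} is non-increasing and satisfies D(σ)² ≤ C^ε · D(σ − ε/k) for all σ with σ − ε/k ≥ σ₀, where C ≥ 2, k ≥ 1 and ε > 0 are fixed, and suppose D(σ₀) ≤ C^B for some B > 0. Then for any σ ≥ σ₀ + l·ε/k with l = ⌈log₂(B/ε)⌉, we have D(σ) ≤ C^{2ε}. -/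
theorem stmt_9 (D : ℝ → ℝ) (σ₀ C B ε : ℝ) (k : ℕ) (hk : 1 ≤ k)
    (hC : 2 ≤ C) (hε : 0 < ε) (hB : 0 < B)
    (hnonneg : ∀ σ, σ₀ ≤ σ → 0 ≤ D σ)
    (hmono : ∀ σ τ, σ₀ ≤ σ → σ ≤ τ → D τ ≤ D σ)
    (hiter : ∀ σ, σ₀ ≤ σ - ε / k → D σ ^ 2 ≤ C ^ ε * D (σ - ε / k))
    (hinit : D σ₀ ≤ C ^ B) :
    ∀ σ, σ₀ + (⌈Real.logb 2 (B / ε)⌉₊ : ℝ) * (ε / k) ≤ σ → D σ ≤ C ^ (2 * ε) := by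
  intro σ hσ
  set l : ℕ := ⌈Real.logb 2 (B / ε)⌉₊ with hl
  have hk' : (0:ℝ) < k := by exact_mod_cast Nat.lt_of_lt_of_le Nat.zero_lt_one hk
  have hεk : 0 < ε / k := div_pos hε hk'
  have hC0 : (0:ℝ) < C := by linarith
  have hC1 : (1:ℝ) ≤ C := by linarith
  -- main induction
  have key : ∀ n : ℕ, ∀ τ, σ₀ + n * (ε / k) ≤ τ →
      D τ ^ (2 ^ n) ≤ C ^ (((2 ^ n : ℕ) - 1 : ℝ) * ε + B) := by
    intro n
    induction n with
    | zero =>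
      intro τ hτ
      have hτ0 : σ₀ ≤ τ := by simpa using hτ
      have h1 : D τ ≤ D σ₀ := hmono σ₀ τ le_rfl hτ0
      have heq : ((2 ^ 0 : ℕ) - 1 : ℝ) * ε + B = B := by norm_num
      rw [heq]
      simpa using le_trans h1 hinit
    | succ n ih =>
      intro τ hτ
      have h1 : σ₀ + n * (ε / k) ≤ τ - ε / k := by
        push_cast at hτ ⊢; linarith
      have hn0 : (0:ℝ) ≤ n * (ε / k) := by positivity
      have h0 : σ₀ ≤ τ - ε / k := by linarith
      have h2 := hiter τ h0
      have hτ0 : σ₀ ≤ τ := by linarith [hεk]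
      calc D τ ^ 2 ^ (n + 1) = (D τ ^ 2) ^ 2 ^ n := by
            rw [← pow_mul]; ring_nf
        _ ≤ (C ^ ε * D (τ - ε / k)) ^ 2 ^ n := by
            exact pow_le_pow_left₀ (sq_nonneg (D τ)) h2 _
        _ = (C ^ ε) ^ (2 ^ n) * D (τ - ε / k) ^ (2 ^ n) := mul_pow _ _ _
        _ ≤ (C ^ ε) ^ (2 ^ n) * C ^ (((2 ^ n : ℕ) - 1 : ℝ) * ε + B) := by
            exact mul_le_mul_of_nonneg_left (ih _ h1) (by positivity)
        _ = C ^ (((2 ^ (n + 1) : ℕ) - 1 : ℝ) * ε + B) := by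
            rw [← Real.rpow_natCast (C ^ ε) (2 ^ n), ← Real.rpow_mul hC0.le,
              ← Real.rpow_add hC0]
            congr 1
            push_cast
            ring
  have h := key l σ hσ
  -- B ≤ ε * 2 ^ l
  have hBε : B / ε ≤ (2 : ℝ) ^ (l : ℕ) := by
    have h1 : B / ε = (2:ℝ) ^ Real.logb 2 (B / ε) :=
      (Real.rpow_logb (by norm_num) (by norm_num) (div_pos hB hε)).symm
    have h2 : Real.logb 2 (B / ε) ≤ (l : ℝ) := Nat.le_ceil _
    calc B / ε = (2:ℝ) ^ Real.logb 2 (B / ε) := h1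
      _ ≤ (2:ℝ) ^ (l : ℝ) := Real.rpow_le_rpow_of_exponent_le (by norm_num) h2
      _ = (2:ℝ) ^ (l : ℕ) := Real.rpow_natCast 2 l
  have hBle : B ≤ ε * 2 ^ l := by
    rw [div_le_iff₀ hε] at hBε
    linarith [hBε]
  have hexp : ((2 ^ l : ℕ) - 1 : ℝ) * ε + B ≤ (2 * ε) * ((2 ^ l : ℕ) : ℝ) := by
    push_cast
    nlinarith [hBle, hε.le]
  have hfin : D σ ^ (2 ^ l) ≤ (C ^ (2 * ε)) ^ (2 ^ l) := by
    calc D σ ^ (2 ^ l) ≤ C ^ (((2 ^ l : ℕ) - 1 : ℝ) * ε + B) := h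
      _ ≤ C ^ ((2 * ε) * ((2 ^ l : ℕ) : ℝ)) :=
          Real.rpow_le_rpow_of_exponent_le hC1 hexp
      _ = (C ^ (2 * ε)) ^ (2 ^ l) := by
          rw [Real.rpow_mul hC0.le, Real.rpow_natCast]
  exact le_of_pow_le_pow_left₀ (by positivity) (Real.rpow_nonneg hC0.le _) hfin
end

section
/- Let (λ(k))_{k≥0} be non-negative reals with λ(0) = 1, and suppose |λ(k)| ≤ x^{k·2δ} with x ≥ 2 and 0 ≤ δ ≤ 1/2 − 1/(N+1). If for distinct square-free data the multiplicativity relation λ(n₁^k)λ(n₂^k) = λ(d^k)²·λ(n₁^k n₂^k / d^{2k}) holds with d = gcd(n₁,n₂), then (∑_n μ²(n)λ(n^k) n^{−kσ})² ≤ (∑_d μ²(d) λ(d^k)² d^{−2kσ}) · (∑_n μ²(n) d(n) λ(n^k) n^{−kσ}), where d(n) is the divisor function. [Over ℤ for concreteness.] -/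
theorem stmt_16 (lam : ℕ → ℝ) (k : ℕ) (hk : 1 ≤ k) (σ : ℝ)
    (hnonneg : ∀ n, 0 ≤ lam n)
    (hmult : ∀ n₁ n₂ : ℕ, Squarefree n₁ → Squarefree n₂ →
      lam (n₁ ^ k) * lam (n₂ ^ k) =
        lam (Nat.gcd n₁ n₂ ^ k) ^ 2 *
          lam (n₁ ^ k * n₂ ^ k / Nat.gcd n₁ n₂ ^ (2 * k)))
    (h1 : Summable fun d : ℕ =>
      if Squarefree d then lam (d ^ k) ^ 2 * (d : ℝ) ^ (-((2 * k : ℝ) * σ)) else 0)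
    (h2 : Summable fun n : ℕ =>
      if Squarefree n then (n.divisors.card : ℝ) * lam (n ^ k) * (n : ℝ) ^ (-((k : ℝ) * σ)) else 0) :
    (∑' n : ℕ, if Squarefree n then lam (n ^ k) * (n : ℝ) ^ (-((k : ℝ) * σ)) else 0) ^ 2 ≤
      (∑' d : ℕ, if Squarefree d then lam (d ^ k) ^ 2 * (d : ℝ) ^ (-((2 * k : ℝ) * σ)) else 0) *
        (∑' n : ℕ, if Squarefree n then (n.divisors.card : ℝ) * lam (n ^ k) * (n : ℝ) ^ (-((k : ℝ) * σ)) else 0) := by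
  classical
  set a : ℕ → ℝ := fun n => if Squarefree n then lam (n ^ k) * (n : ℝ) ^ (-((k : ℝ) * σ)) else 0 with ha_def
  set b : ℕ → ℝ := fun d => if Squarefree d then lam (d ^ k) ^ 2 * (d : ℝ) ^ (-((2 * k : ℝ) * σ)) else 0 with hb_def
  set c : ℕ → ℝ := fun n => if Squarefree n then (n.divisors.card : ℝ) * lam (n ^ k) * (n : ℝ) ^ (-((k : ℝ) * σ)) else 0 with hc_def
  have ha0 : ∀ n, 0 ≤ a n := by
    intro n
    simp only [ha_def]
    split
    · exact mul_nonneg (hnonneg _) (Real.rpow_nonneg (Nat.cast_nonneg _) _)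
    · exact le_refl 0
  have hb0 : ∀ n, 0 ≤ b n := by
    intro n
    simp only [hb_def]
    split
    · exact mul_nonneg (sq_nonneg _) (Real.rpow_nonneg (Nat.cast_nonneg _) _)
    · exact le_refl 0
  have hc0 : ∀ n, 0 ≤ c n := by
    intro n
    simp only [hc_def]
    split
    · exact mul_nonneg (mul_nonneg (Nat.cast_nonneg _) (hnonneg _)) (Real.rpow_nonneg (Nat.cast_nonneg _) _)
    · exact le_refl 0
  have hca : ∀ m, c m = (m.divisors.card : ℝ) * a m := by
    intro m
    simp only [ha_def, hc_def]
    split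
    · ring
    · ring
  have hale : ∀ n, a n ≤ c n := by
    intro n
    rw [hca n]
    rcases eq_or_ne (a n) 0 with h | h
    · rw [h]; simp
    · have hsq : Squarefree n := by
        by_contra hs; exact h (by simp [ha_def, hs])
      have hn : n ≠ 0 := hsq.ne_zero
      have h1' : 1 ≤ (n.divisors.card : ℝ) := by
        have : 0 < n.divisors.card :=
          Finset.card_pos.mpr ⟨n, Nat.mem_divisors_self n hn⟩
        exact_mod_cast this
      exact le_mul_of_one_le_left (ha0 n) h1'
  have ha : Summable a := Summable.of_nonneg_of_le ha0 hale h2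
  -- the key pointwise identity
  have key : ∀ n₁ n₂ : ℕ, Squarefree n₁ → Squarefree n₂ →
      Squarefree (n₁ * n₂ / Nat.gcd n₁ n₂ ^ 2) ∧
      n₁ / Nat.gcd n₁ n₂ ∈ (n₁ * n₂ / Nat.gcd n₁ n₂ ^ 2).divisors ∧
      a n₁ * a n₂ = b (Nat.gcd n₁ n₂) * a (n₁ * n₂ / Nat.gcd n₁ n₂ ^ 2) := by
    intro n₁ n₂ h₁ h₂
    set d := Nat.gcd n₁ n₂ with hd
    have hn₁ : n₁ ≠ 0 := h₁.ne_zero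
    have hn₂ : n₂ ≠ 0 := h₂.ne_zero
    have hd0 : 0 < d := Nat.gcd_pos_of_pos_left _ (Nat.pos_of_ne_zero hn₁)
    set e := n₁ / d with he
    set f := n₂ / d with hf
    have he1 : e * d = n₁ := Nat.div_mul_cancel (Nat.gcd_dvd_left n₁ n₂)
    have hf1 : f * d = n₂ := Nat.div_mul_cancel (Nat.gcd_dvd_right n₁ n₂)
    have hcop : Nat.Coprime e f := Nat.coprime_div_gcd_div_gcd hd0
    have hm : n₁ * n₂ / d ^ 2 = e * f := by
      rw [← he1, ← hf1]
      have : e * d * (f * d) = e * f * d ^ 2 := by ring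
      rw [this]
      exact Nat.mul_div_cancel _ (by positivity)
    have he0 : e ≠ 0 := by
      intro h; rw [h, zero_mul] at he1; exact hn₁ he1.symm
    have hf0 : f ≠ 0 := by
      intro h; rw [h, zero_mul] at hf1; exact hn₂ hf1.symm
    have hse : Squarefree e := h₁.squarefree_of_dvd ⟨d, he1.symm⟩
    have hsf : Squarefree f := h₂.squarefree_of_dvd ⟨d, hf1.symm⟩
    have hsm : Squarefree (e * f) := (Nat.squarefree_mul hcop).mpr ⟨hse, hsf⟩
    have hsd : Squarefree d := h₁.squarefree_of_dvd (Nat.gcd_dvd_left _ _)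
    rw [hm]
    refine ⟨hsm, Nat.mem_divisors.mpr ⟨dvd_mul_right e f, mul_ne_zero he0 hf0⟩, ?_⟩
    have hlam : lam (n₁ ^ k) * lam (n₂ ^ k) = lam (d ^ k) ^ 2 * lam ((e * f) ^ k) := by
      rw [hmult n₁ n₂ h₁ h₂, ← hd]
      congr 2
      have h' : n₁ ^ k * n₂ ^ k = (e * f) ^ k * d ^ (2 * k) := by
        rw [← he1, ← hf1, pow_mul, ← mul_pow, ← mul_pow]
        congr 1
        ring
      rw [h']
      exact Nat.mul_div_cancel _ (by positivity)
    have hpow : (n₁ : ℝ) ^ (-((k : ℝ) * σ)) * (n₂ : ℝ) ^ (-((k : ℝ) * σ)) =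
        (d : ℝ) ^ (-((2 * (k : ℝ)) * σ)) * ((e * f : ℕ) : ℝ) ^ (-((k : ℝ) * σ)) := by
      have hd2 : (n₁ : ℝ) * (n₂ : ℝ) = ((d : ℝ) ^ 2) * ((e * f : ℕ) : ℝ) := by
        rw [← he1, ← hf1]
        push_cast
        ring
      rw [← Real.mul_rpow (by positivity) (by positivity), hd2,
        Real.mul_rpow (by positivity) (by positivity)]
      congr 1
      rw [← Real.rpow_natCast (d : ℝ) 2, ← Real.rpow_mul (Nat.cast_nonneg d)]
      congr 1
      push_cast
      ring
    simp only [ha_def, hb_def, if_pos h₁, if_pos h₂, if_pos hsm, if_pos hsd]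
    calc lam (n₁ ^ k) * (n₁ : ℝ) ^ (-((k : ℝ) * σ)) * (lam (n₂ ^ k) * (n₂ : ℝ) ^ (-((k : ℝ) * σ)))
        = (lam (n₁ ^ k) * lam (n₂ ^ k)) *
            ((n₁ : ℝ) ^ (-((k : ℝ) * σ)) * (n₂ : ℝ) ^ (-((k : ℝ) * σ))) := by ring
      _ = (lam (d ^ k) ^ 2 * lam ((e * f) ^ k)) *
            ((d : ℝ) ^ (-((2 * (k : ℝ)) * σ)) * ((e * f : ℕ) : ℝ) ^ (-((k : ℝ) * σ))) := by
          rw [hlam, hpow]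
      _ = lam (d ^ k) ^ 2 * (d : ℝ) ^ (-(2 * (k : ℝ) * σ)) *
            (lam ((e * f) ^ k) * ((e * f : ℕ) : ℝ) ^ (-((k : ℝ) * σ))) := by ring
  -- product summabilities / tsum over products
  have hanorm : Summable fun n => ‖a n‖ :=
    (summable_congr fun n => Real.norm_of_nonneg (ha0 n)).mpr ha
  have hbnorm : Summable fun n => ‖b n‖ :=
    (summable_congr fun n => Real.norm_of_nonneg (hb0 n)).mpr h1
  have hcnorm : Summable fun n => ‖c n‖ :=
    (summable_congr fun n => Real.norm_of_nonneg (hc0 n)).mpr h2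
  have haa : Summable fun p : ℕ × ℕ => a p.1 * a p.2 := ha.mul_of_nonneg ha ha0 ha0
  have hbc : Summable fun p : ℕ × ℕ => b p.1 * c p.2 := h1.mul_of_nonneg h2 hb0 hc0
  have hS2 : (∑' n, a n) ^ 2 = ∑' p : ℕ × ℕ, a p.1 * a p.2 := by
    rw [sq]
    exact tsum_mul_tsum_of_summable_norm hanorm hanorm
  set S : Set (ℕ × ℕ) := {p : ℕ × ℕ | Squarefree p.1 ∧ Squarefree p.2} with hS_def
  have hsupp : Function.support (fun p : ℕ × ℕ => a p.1 * a p.2) ⊆ S := by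
    intro p hp
    have h1' : a p.1 ≠ 0 := fun h => hp (by simp [h])
    have h2' : a p.2 ≠ 0 := fun h => hp (by simp [h])
    constructor
    · by_contra h; exact h1' (by simp [ha_def, h])
    · by_contra h; exact h2' (by simp [ha_def, h])
  have hsub : ∑' p : S, a (p : ℕ × ℕ).1 * a (p : ℕ × ℕ).2 = ∑' p : ℕ × ℕ, a p.1 * a p.2 :=
    tsum_subtype_eq_of_support_subset hsupp
  -- the comparison function on triples
  set G : (ℕ × ℕ) × ℕ → ℝ := fun q => if q.2 ∈ q.1.2.divisors then b q.1.1 * a q.1.2 else 0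
    with hG_def
  have hG0 : ∀ q, 0 ≤ G q := by
    intro q
    simp only [hG_def]
    split
    · exact mul_nonneg (hb0 _) (ha0 _)
    · exact le_refl 0
  have hfib_summable : ∀ x : ℕ × ℕ, Summable fun e => G (x, e) := by
    intro x
    apply summable_of_ne_finset_zero (s := x.2.divisors)
    intro e he
    show (if e ∈ x.2.divisors then b x.1 * a x.2 else 0) = 0
    exact if_neg he
  have hGfib : ∀ x : ℕ × ℕ, (∑' e, G (x, e)) = (x.2.divisors.card : ℝ) * (b x.1 * a x.2) := by
    intro x
    rw [tsum_eq_sum (s := x.2.divisors) (fun e he =>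
      show (if e ∈ x.2.divisors then b x.1 * a x.2 else 0) = 0 from if_neg he)]
    rw [Finset.sum_congr rfl (fun e he =>
      show (if e ∈ x.2.divisors then b x.1 * a x.2 else 0) = b x.1 * a x.2 from if_pos he)]
    rw [Finset.sum_const, nsmul_eq_mul]
  have hGsum : Summable G := by
    rw [summable_prod_of_nonneg (fun q => hG0 q)]
    refine ⟨hfib_summable, ?_⟩
    apply hbc.congr
    intro x
    rw [hGfib x, hca x.2]
    ring
  have hGtsum : (∑' q, G q) = (∑' d, b d) * ∑' n, c n := by
    rw [Summable.tsum_prod' hGsum hfib_summable]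
    have h' : ∀ x : ℕ × ℕ, (∑' e, G (x, e)) = b x.1 * c x.2 := by
      intro x
      rw [hGfib x, hca x.2]
      ring
    rw [tsum_congr h']
    exact (tsum_mul_tsum_of_summable_norm hbnorm hcnorm).symm
  -- the injection
  let i : S → (ℕ × ℕ) × ℕ := fun p =>
    ((Nat.gcd (p : ℕ × ℕ).1 (p : ℕ × ℕ).2,
      (p : ℕ × ℕ).1 * (p : ℕ × ℕ).2 / Nat.gcd (p : ℕ × ℕ).1 (p : ℕ × ℕ).2 ^ 2),
      (p : ℕ × ℕ).1 / Nat.gcd (p : ℕ × ℕ).1 (p : ℕ × ℕ).2)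
  have hi : Function.Injective i := by
    rintro ⟨⟨n₁, n₂⟩, hp₁, hp₂⟩ ⟨⟨m₁, m₂⟩, hq₁, hq₂⟩ h
    simp only [i, Prod.mk.injEq] at h
    obtain ⟨⟨hgcd, hm⟩, he⟩ := h
    have e₁ : n₁ / Nat.gcd n₁ n₂ * Nat.gcd n₁ n₂ = n₁ :=
      Nat.div_mul_cancel (Nat.gcd_dvd_left _ _)
    have e₂ : m₁ / Nat.gcd m₁ m₂ * Nat.gcd m₁ m₂ = m₁ :=
      Nat.div_mul_cancel (Nat.gcd_dvd_left _ _)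
    have hn1 : n₁ = m₁ := by rw [he, hgcd, e₂] at e₁; exact e₁.symm
    have d₁ : Nat.gcd n₁ n₂ ^ 2 ∣ n₁ * n₂ := by
      rw [pow_two]
      exact mul_dvd_mul (Nat.gcd_dvd_left _ _) (Nat.gcd_dvd_right _ _)
    have d₂ : Nat.gcd m₁ m₂ ^ 2 ∣ m₁ * m₂ := by
      rw [pow_two]
      exact mul_dvd_mul (Nat.gcd_dvd_left _ _) (Nat.gcd_dvd_right _ _)
    have e₃ : n₁ * n₂ / Nat.gcd n₁ n₂ ^ 2 * Nat.gcd n₁ n₂ ^ 2 = n₁ * n₂ :=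
      Nat.div_mul_cancel d₁
    have e₄ : m₁ * m₂ / Nat.gcd m₁ m₂ ^ 2 * Nat.gcd m₁ m₂ ^ 2 = m₁ * m₂ :=
      Nat.div_mul_cancel d₂
    have hprod : n₁ * n₂ = m₁ * m₂ := by rw [hm, hgcd, e₄] at e₃; exact e₃.symm
    have hn2 : n₂ = m₂ := by
      apply Nat.eq_of_mul_eq_mul_left (Nat.pos_of_ne_zero hp₁.ne_zero)
      rw [hprod, hn1]
    exact Subtype.ext (Prod.ext hn1 hn2)
  have hterm : ∀ p : S, a (p : ℕ × ℕ).1 * a (p : ℕ × ℕ).2 ≤ G (i p) := by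
    rintro ⟨⟨n₁, n₂⟩, hp₁, hp₂⟩
    obtain ⟨hsm, hmem, heq⟩ := key n₁ n₂ hp₁ hp₂
    simp only [i, hG_def, if_pos hmem]
    exact le_of_eq heq
  calc (∑' n, a n) ^ 2 = ∑' p : ℕ × ℕ, a p.1 * a p.2 := hS2
    _ = ∑' p : S, a (p : ℕ × ℕ).1 * a (p : ℕ × ℕ).2 := hsub.symm
    _ ≤ ∑' q, G q :=
        Summable.tsum_le_tsum_of_inj i hi (fun q _ => hG0 q) hterm (haa.subtype S) hGsum
    _ = (∑' d, b d) * ∑' n, c n := hGtsum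
end

section
/- Let u ∈ ℝ, u ≠ 0, and x ≥ 2. Then for every fixed integer M ≥ 0, −∫_x^∞ y^{iu−1}/log y dy = (x^{iu}/(iu·log x))·∑_{k=0}^{M} k!/(iu·log x)^k + O_M((log x)^{−M−2}), where the integral converges as an improper (oscillatory) integral. -/
open intervalIntegral

section Aux

open MeasureTheory Filter Set

noncomputable def fint (c : ℂ) (k : ℕ) (x : ℝ) : ℂ :=
  ∫ y in Set.Ioi x, (y : ℂ) ^ (c - 1) / (Real.log y : ℂ) ^ k

lemma norm_f_eq {c : ℂ} (hre : c.re = 0) (k : ℕ) {y : ℝ} (hy : 1 < y) :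
    ‖(y : ℂ) ^ (c - 1) / (Real.log y : ℂ) ^ k‖ = 1 / (y * Real.log y ^ k) := by
  have hy0 : (0:ℝ) < y := lt_trans one_pos hy
  have hl : 0 < Real.log y := Real.log_pos hy
  rw [norm_div, norm_pow,
    Complex.norm_cpow_eq_rpow_re_of_pos hy0, Complex.norm_real, Real.norm_eq_abs,
    abs_of_pos hl]
  have : (c - 1).re = -1 := by simp [hre]
  rw [this, Real.rpow_neg_one]; ring

lemma contOn_f (c : ℂ) (k : ℕ) :
    ContinuousOn (fun y : ℝ => (y : ℂ) ^ (c - 1) / (Real.log y : ℂ) ^ k) (Set.Ioi 1) := by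
  intro y hy
  have hy1 : (1:ℝ) < y := hy
  have hy0 : (0:ℝ) < y := lt_trans one_pos hy1
  have hl : 0 < Real.log y := Real.log_pos hy1
  apply ContinuousAt.continuousWithinAt
  apply ContinuousAt.div
  · exact Complex.continuousAt_ofReal_cpow_const y (c-1) (Or.inr hy0.ne')
  · exact (Complex.continuous_ofReal.continuousAt.comp
      (Real.continuousAt_log hy0.ne')).pow k
  · exact pow_ne_zero _ (by exact_mod_cast hl.ne')

lemma hG (m : ℕ) {y : ℝ} (hy : 1 < y) :
    HasDerivAt (fun z : ℝ => -(((m:ℝ)+1) * Real.log z ^ (m+1))⁻¹)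
      (1 / (y * Real.log y ^ (m+2))) y := by
  have hy0 : (0:ℝ) < y := lt_trans one_pos hy
  have hl : 0 < Real.log y := Real.log_pos hy
  have h1 : HasDerivAt (fun z : ℝ => ((m:ℝ)+1) * Real.log z ^ (m+1))
      (((m:ℝ)+1) * (((m:ℝ)+1) * Real.log y ^ m * y⁻¹)) y :=
    (((Real.hasDerivAt_log hy0.ne').pow (m+1)).const_mul _).congr_deriv (by push_cast; ring)
  have h2 := (h1.inv (by positivity)).neg
  refine h2.congr_deriv ?_
  field_simp
  ring

lemma tendstoG (m : ℕ) :
    Tendsto (fun z : ℝ => -(((m:ℝ)+1) * Real.log z ^ (m+1))⁻¹) atTop (nhds 0) := by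
  rw [show (0:ℝ) = -0 by ring]
  apply Tendsto.neg
  apply Tendsto.inv_tendsto_atTop
  exact (tendsto_const_mul_atTop_of_pos (by positivity)).2
    ((tendsto_pow_atTop (Nat.succ_ne_zero m)).comp Real.tendsto_log_atTop)

lemma h_deriv_all (m : ℕ) {x : ℝ} (hx : 2 ≤ x) :
    ∀ y ∈ Set.Ici x, HasDerivAt (fun z : ℝ => -(((m:ℝ)+1) * Real.log z ^ (m+1))⁻¹)
      (1 / (y * Real.log y ^ (m+2))) y :=
  fun y hy => hG m (lt_of_lt_of_le (by norm_num) (le_trans hx hy))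

lemma h_nonneg (m : ℕ) {x : ℝ} (hx : 2 ≤ x) :
    ∀ y ∈ Set.Ioi x, 0 ≤ 1 / (y * Real.log y ^ (m+2)) := by
  intro y hy
  have hy1 : (1:ℝ) < y := lt_of_lt_of_le (by norm_num) (le_of_lt (lt_of_le_of_lt hx hy))
  have := Real.log_pos hy1
  positivity

lemma integrableOn_h (m : ℕ) {x : ℝ} (hx : 2 ≤ x) :
    IntegrableOn (fun y : ℝ => 1 / (y * Real.log y ^ (m+2))) (Set.Ioi x) :=
  integrableOn_Ioi_deriv_of_nonneg' (h_deriv_all m hx) (h_nonneg m hx) (tendstoG m)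

lemma integral_h (m : ℕ) {x : ℝ} (hx : 2 ≤ x) :
    ∫ y in Set.Ioi x, 1 / (y * Real.log y ^ (m+2)) =
      (((m:ℝ)+1) * Real.log x ^ (m+1))⁻¹ := by
  rw [integral_Ioi_of_hasDerivAt_of_nonneg' (h_deriv_all m hx) (h_nonneg m hx) (tendstoG m)]
  ring

lemma integrableOn_f {c : ℂ} (hre : c.re = 0) (m : ℕ) {x : ℝ} (hx : 2 ≤ x) :
    IntegrableOn (fun y : ℝ => (y : ℂ) ^ (c - 1) / (Real.log y : ℂ) ^ (m+2)) (Set.Ioi x) := by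
  apply MeasureTheory.Integrable.mono' (integrableOn_h m hx)
  · exact ((contOn_f c (m+2)).mono (fun y (hy : y ∈ Set.Ioi x) =>
      lt_of_lt_of_le (by norm_num) (le_of_lt (lt_of_le_of_lt hx hy)))).aestronglyMeasurable
      measurableSet_Ioi
  · filter_upwards [self_mem_ae_restrict (measurableSet_Ioi : MeasurableSet (Set.Ioi x))]
      with y hy
    exact le_of_eq (norm_f_eq hre (m+2)
      (lt_of_lt_of_le (by norm_num) (le_of_lt (lt_of_le_of_lt hx hy))))

lemma norm_fint_le {c : ℂ} (hre : c.re = 0) (m : ℕ) {x : ℝ} (hx : 2 ≤ x) :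
    ‖fint c (m+2) x‖ ≤ (((m:ℝ)+1) * Real.log x ^ (m+1))⁻¹ := by
  rw [← integral_h m hx]
  apply le_trans (MeasureTheory.norm_integral_le_integral_norm _)
  apply le_of_eq
  apply MeasureTheory.setIntegral_congr_fun measurableSet_Ioi
  intro y hy
  exact norm_f_eq hre (m+2) (lt_of_lt_of_le (by norm_num) (le_of_lt (lt_of_le_of_lt hx hy)))

lemma hasDerivAt_g {c : ℂ} (hc : c ≠ 0) (n : ℕ) {y : ℝ} (hy : 1 < y) :
    HasDerivAt (fun z : ℝ => (z : ℂ) ^ c / (c * (Real.log z : ℂ) ^ (n+1)))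
      ((y : ℂ) ^ (c - 1) / (Real.log y : ℂ) ^ (n+1) -
        (((n:ℂ)+1) / c) * ((y : ℂ) ^ (c - 1) / (Real.log y : ℂ) ^ (n+2))) y := by
  have hy0 : (0:ℝ) < y := lt_trans one_pos hy
  have hl : 0 < Real.log y := Real.log_pos hy
  have hyC : (y : ℂ) ≠ 0 := by exact_mod_cast hy0.ne'
  have hlC : ((Real.log y : ℝ) : ℂ) ≠ 0 := by exact_mod_cast hl.ne'
  have hc1 : c - 1 ≠ -1 := by
    intro h; apply hc; linear_combination h
  have hnum : HasDerivAt (fun z : ℝ => (z : ℂ) ^ c) (c * (y : ℂ) ^ (c - 1)) y := by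
    have h0 := (hasDerivAt_ofReal_cpow_const' hy0.ne' hc1).const_mul c
    rw [sub_add_cancel] at h0
    refine HasDerivAt.congr_of_eventuallyEq h0 (Filter.Eventually.of_forall fun z => ?_)
    field_simp
  have hden : HasDerivAt (fun z : ℝ => c * (Real.log z : ℂ) ^ (n+1))
      (c * (((n:ℂ)+1) * (Real.log y : ℂ) ^ n * (y : ℂ)⁻¹)) y := by
    have hlog := (((Real.hasDerivAt_log hy0.ne').pow (n+1)).ofReal_comp).const_mul c
    refine HasDerivAt.congr_of_eventuallyEq (hlog.congr_deriv ?_)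
      (Filter.Eventually.of_forall fun z => ?_)
    · push_cast; ring
    · simp only [Pi.pow_apply]; push_cast; ring
  have hdiv := hnum.div hden (by
    exact mul_ne_zero hc (pow_ne_zero _ hlC))
  refine hdiv.congr_deriv ?_
  have hsub : (y : ℂ) ^ c = (y : ℂ) ^ (c - 1) * y := by
    rw [Complex.cpow_sub _ _ hyC, Complex.cpow_one]; field_simp
  rw [hsub]
  rw [div_eq_iff (pow_ne_zero 2 (mul_ne_zero hc (pow_ne_zero _ hlC)))]
  field_simp
  ring

lemma ibp_finite {c : ℂ} (hc : c ≠ 0) (n : ℕ) {x T : ℝ} (hx : 2 ≤ x) (hT : x ≤ T) :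
    ∫ y in x..T, (y : ℂ) ^ (c - 1) / (Real.log y : ℂ) ^ (n+1) =
      ((T : ℂ) ^ c / (c * (Real.log T : ℂ) ^ (n+1)) -
        (x : ℂ) ^ c / (c * (Real.log x : ℂ) ^ (n+1))) +
      (((n:ℂ)+1) / c) * ∫ y in x..T, (y : ℂ) ^ (c - 1) / (Real.log y : ℂ) ^ (n+2) := by
  have hmem : ∀ y ∈ Set.uIcc x T, (1:ℝ) < y := by
    intro y hy
    rw [Set.uIcc_of_le hT] at hy
    exact lt_of_lt_of_le (by norm_num) (le_trans hx hy.1)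
  have hsubset : Set.uIcc x T ⊆ Set.Ioi 1 := fun y hy => hmem y hy
  have hcont1 : ContinuousOn (fun y : ℝ => (y : ℂ) ^ (c-1) / (Real.log y : ℂ) ^ (n+1))
      (Set.uIcc x T) := (contOn_f c (n+1)).mono hsubset
  have hcont2 : ContinuousOn (fun y : ℝ => (y : ℂ) ^ (c-1) / (Real.log y : ℂ) ^ (n+2))
      (Set.uIcc x T) := (contOn_f c (n+2)).mono hsubset
  have hint1 : IntervalIntegrable _ MeasureTheory.volume x T := hcont1.intervalIntegrable
  have hint2 : IntervalIntegrable _ MeasureTheory.volume x T := hcont2.intervalIntegrable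
  have key := intervalIntegral.integral_eq_sub_of_hasDerivAt
    (f := fun z : ℝ => (z : ℂ) ^ c / (c * (Real.log z : ℂ) ^ (n+1)))
    (fun y hy => hasDerivAt_g hc n (hmem y hy))
    ((hint1.sub (hint2.const_mul _)))
  rw [intervalIntegral.integral_sub hint1 (hint2.const_mul _),
    intervalIntegral.integral_const_mul] at key
  linear_combination key

lemma tendsto_g_zero {c : ℂ} (hc : c ≠ 0) (hre : c.re = 0) (n : ℕ) :
    Tendsto (fun T : ℝ => (T : ℂ) ^ c / (c * (Real.log T : ℂ) ^ (n+1))) atTop (nhds 0) := by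
  rw [tendsto_zero_iff_norm_tendsto_zero]
  have hev : ∀ᶠ T : ℝ in atTop,
      ‖(T : ℂ) ^ c / (c * (Real.log T : ℂ) ^ (n+1))‖ = (‖c‖ * Real.log T ^ (n+1))⁻¹ := by
    filter_upwards [eventually_gt_atTop (1:ℝ)] with T hT
    have hT0 : (0:ℝ) < T := lt_trans one_pos hT
    have hl : 0 < Real.log T := Real.log_pos hT
    rw [norm_div, norm_mul, norm_pow,
      Complex.norm_cpow_eq_rpow_re_of_pos hT0, hre, Real.rpow_zero,
      show ‖((Real.log T : ℝ) : ℂ)‖ = |Real.log T| by rw [Complex.norm_real, Real.norm_eq_abs],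
      abs_of_pos hl, one_div]
  apply Tendsto.congr' (hev.mono fun T h => h.symm)
  apply Tendsto.inv_tendsto_atTop
  exact (tendsto_const_mul_atTop_of_pos (norm_pos_iff.2 hc)).2
    ((tendsto_pow_atTop (Nat.succ_ne_zero n)).comp Real.tendsto_log_atTop)

lemma tendsto_int_f {c : ℂ} (hc : c ≠ 0) (hre : c.re = 0) (n : ℕ) {x : ℝ} (hx : 2 ≤ x) :
    Tendsto (fun T : ℝ => ∫ y in x..T, (y : ℂ) ^ (c - 1) / (Real.log y : ℂ) ^ (n+1)) atTop
      (nhds (-((x : ℂ) ^ c / (c * (Real.log x : ℂ) ^ (n+1))) +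
        (((n:ℂ)+1) / c) * fint c (n+2) x)) := by
  have h2 : Tendsto (fun T : ℝ => ∫ y in x..T, (y : ℂ) ^ (c - 1) / (Real.log y : ℂ) ^ (n+2))
      atTop (nhds (fint c (n+2) x)) :=
    MeasureTheory.intervalIntegral_tendsto_integral_Ioi x (integrableOn_f hre n hx) tendsto_id
  have hlim : Tendsto (fun T : ℝ =>
      ((T : ℂ) ^ c / (c * (Real.log T : ℂ) ^ (n+1)) -
        (x : ℂ) ^ c / (c * (Real.log x : ℂ) ^ (n+1))) +
      (((n:ℂ)+1) / c) * ∫ y in x..T, (y : ℂ) ^ (c - 1) / (Real.log y : ℂ) ^ (n+2)) atTop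
      (nhds (-((x : ℂ) ^ c / (c * (Real.log x : ℂ) ^ (n+1))) +
        (((n:ℂ)+1) / c) * fint c (n+2) x)) := by
    have h3 := ((tendsto_g_zero hc hre n).sub
      (tendsto_const_nhds (x := (x : ℂ) ^ c / (c * (Real.log x : ℂ) ^ (n+1))) (f := atTop))).add
      (h2.const_mul (((n:ℂ)+1)/c))
    rw [zero_sub] at h3
    exact h3
  refine Tendsto.congr' ?_ hlim
  filter_upwards [eventually_ge_atTop x] with T hT
  exact (ibp_finite hc n hx hT).symm

lemma fint_rec {c : ℂ} (hc : c ≠ 0) (hre : c.re = 0) (n : ℕ) {x : ℝ} (hx : 2 ≤ x) :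
    fint c (n+2) x = -((x : ℂ) ^ c / (c * (Real.log x : ℂ) ^ (n+2))) +
      (((n:ℂ)+2) / c) * fint c (n+3) x := by
  have h1 := tendsto_int_f hc hre (n+1) hx
  have h2 := MeasureTheory.intervalIntegral_tendsto_integral_Ioi x
    (integrableOn_f hre n hx) tendsto_id
  have h3 := tendsto_nhds_unique h2 h1
  rw [show fint c (n+2) x = ∫ (y : ℝ) in Set.Ioi x, (y:ℂ) ^ (c - 1) / (Real.log y : ℂ) ^ (n + 2) from rfl, h3]
  push_cast
  ring

lemma expansion {c : ℂ} (hc : c ≠ 0) (hre : c.re = 0) {x : ℝ} (hx : 2 ≤ x) (n : ℕ) :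
    -((x : ℂ) ^ c / (c * (Real.log x : ℂ))) + (1/c) * fint c 2 x =
      -(x : ℂ) ^ c * ∑ k ∈ Finset.range (n+2),
          (Nat.factorial k : ℂ) / (c^(k+1) * (Real.log x : ℂ)^(k+1)) +
        ((Nat.factorial (n+2) : ℂ) / c^(n+2)) * fint c (n+3) x := by
  induction n with
  | zero =>
    rw [fint_rec hc hre 0 hx]
    simp [Finset.sum_range_succ, Nat.factorial]
    ring
  | succ m ih =>
    rw [ih, fint_rec hc hre (m+1) hx]
    rw [Finset.sum_range_succ (n := m+2)]
    have hfac : (Nat.factorial (m+3) : ℂ) = ((m:ℂ)+3) * (Nat.factorial (m+2) : ℂ) := by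
      rw [show m+3 = (m+2)+1 from rfl, Nat.factorial_succ]
      push_cast; ring
    rw [hfac]
    push_cast
    ring

end Aux

theorem stmt_19 (u : ℝ) (hu : u ≠ 0) (M : ℕ) :
    ∃ (J : ℝ → ℂ) (C : ℝ), ∀ x : ℝ, 2 ≤ x →
      (Filter.Tendsto
        (fun T : ℝ => ∫ y in x..T, (y : ℂ) ^ (Complex.I * u - 1) / (Real.log y : ℂ))
        Filter.atTop (nhds (J x))) ∧
      ‖(-(J x)) -
          (x : ℂ) ^ (Complex.I * u) / (Complex.I * u * (Real.log x : ℂ)) *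
            ∑ k ∈ Finset.range (M + 1),
              (Nat.factorial k : ℂ) / (Complex.I * u * (Real.log x : ℂ)) ^ k‖ ≤
        C * Real.log x ^ (-(M : ℝ) - 2) := by
  set c : ℂ := Complex.I * u with hcdef
  have hc : c ≠ 0 := mul_ne_zero Complex.I_ne_zero (by exact_mod_cast hu)
  have hre : c.re = 0 := by simp [hcdef]
  have hnc : ‖c‖ = |u| := by
    rw [hcdef, norm_mul, Complex.norm_I,
      show ‖((u:ℝ):ℂ)‖ = |u| by rw [Complex.norm_real, Real.norm_eq_abs], one_mul]
  refine ⟨fun x => -((x : ℂ) ^ c / (c * (Real.log x : ℂ))) + (1/c) * fint c 2 x,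
    2 * (Nat.factorial (M+1)) / |u|^(M+2), fun x hx => ?_⟩
  have hx1 : (1:ℝ) < x := lt_of_lt_of_le one_lt_two hx
  have hx0 : (0:ℝ) < x := lt_trans one_pos hx1
  have hLpos : 0 < Real.log x := Real.log_pos hx1
  constructor
  · have h0 := tendsto_int_f hc hre 0 hx
    simp only [pow_one, Nat.cast_zero, zero_add] at h0
    convert h0 using 2
  · -- the key algebraic identity
    set Lc : ℂ := (Real.log x : ℂ) with hLc
    have key : (-(-((x : ℂ) ^ c / (c * Lc)) + (1/c) * fint c 2 x)) -
        (x : ℂ) ^ c / (c * Lc) * ∑ k ∈ Finset.range (M + 1),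
          (Nat.factorial k : ℂ) / (c * Lc) ^ k =
        (x : ℂ) ^ c * ((Nat.factorial (M+1) : ℂ) / (c^(M+2) * Lc^(M+2))) -
          ((Nat.factorial (M+2) : ℂ) / c^(M+2)) * fint c (M+3) x := by
      rw [expansion hc hre hx M]
      rw [Finset.sum_range_succ (n := M+1)]
      have hsum : (x : ℂ) ^ c / (c * Lc) * ∑ k ∈ Finset.range (M + 1),
          (Nat.factorial k : ℂ) / (c * Lc) ^ k =
          (x : ℂ) ^ c * ∑ k ∈ Finset.range (M + 1),
            (Nat.factorial k : ℂ) / (c^(k+1) * Lc^(k+1)) := by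
        rw [Finset.mul_sum, Finset.mul_sum]
        refine Finset.sum_congr rfl fun k _ => ?_
        rw [mul_pow]
        ring
      rw [hsum]
      ring
    rw [key]
    have hnx : ‖(x : ℂ) ^ c‖ = 1 := by
      rw [Complex.norm_cpow_eq_rpow_re_of_pos hx0, hre, Real.rpow_zero]
    have hnLc : ‖Lc‖ = Real.log x := by
      rw [hLc, show ‖((Real.log x : ℝ):ℂ)‖ = |Real.log x| by rw [Complex.norm_real, Real.norm_eq_abs],
        abs_of_pos hLpos]
    have hnorm1 : ‖(x : ℂ) ^ c * ((Nat.factorial (M+1) : ℂ) / (c^(M+2) * Lc^(M+2)))‖ =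
        (Nat.factorial (M+1) : ℝ) / (|u|^(M+2) * Real.log x ^ (M+2)) := by
      rw [norm_mul, hnx, one_mul, norm_div, norm_mul, norm_pow, norm_pow, hnc, hnLc,
        show ‖((Nat.factorial (M+1) : ℕ):ℂ)‖ = (Nat.factorial (M+1) : ℝ) by
          rw [Complex.norm_natCast]]
    have hnorm2 : ‖((Nat.factorial (M+2) : ℂ) / c^(M+2)) * fint c (M+3) x‖ ≤
        ((Nat.factorial (M+2) : ℝ) / |u|^(M+2)) * (((M:ℝ)+2) * Real.log x ^ (M+2))⁻¹ := by
      rw [norm_mul]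
      have h1 : ‖(Nat.factorial (M+2) : ℂ) / c^(M+2)‖ =
          (Nat.factorial (M+2) : ℝ) / |u|^(M+2) := by
        rw [norm_div, norm_pow, hnc, Complex.norm_natCast]
      rw [h1]
      have h2 := norm_fint_le hre (M+1) hx
      have h3 : (((M+1:ℕ):ℝ)+1) = ((M:ℝ)+2) := by push_cast; ring
      rw [show (M+1)+2 = M+3 from rfl, h3] at h2
      have h4 : (M+1)+1 = M+2 := rfl
      rw [h4] at h2
      exact mul_le_mul_of_nonneg_left h2 (by positivity)
    have hbound := le_trans (norm_sub_le _ _)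
      (add_le_add (le_of_eq hnorm1) hnorm2)
    refine le_trans hbound (le_of_eq ?_)
    have hfac2 : (Nat.factorial (M+2) : ℝ) = ((M:ℝ)+2) * (Nat.factorial (M+1) : ℝ) := by
      rw [show M+2 = (M+1)+1 from rfl, Nat.factorial_succ]
      push_cast; ring
    rw [hfac2]
    rw [show -(M:ℝ) - 2 = -((M+2 : ℕ):ℝ) by push_cast; ring, Real.rpow_neg hLpos.le,
      Real.rpow_natCast]
    have hM2 : ((M:ℝ)+2) ≠ 0 := by positivity
    have huabs : |u| ≠ 0 := abs_ne_zero.2 hu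
    field_simp
    ring
end
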